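/- For all T > 0, α ≥ 0, R > 0, M > 0 and τ > 0 there exists a constant C > 0 such that: for every t₀ ∈ [τ, ∞), every probability measure μ₀ on ℝ^d with ∫|u|² dμ₀(u) ≤ M, every x₀ ∈ ℝ^d with |x₀| ≤ R, and every absolutely continuous f : [0,T] → ℝ^d with f(0) = x₀, derivative ḟ ∈ L²([0,T]; ℝ^d) and J_{t₀,μ₀}(f) ≤ α, one has ∫₀ᵀ |ḟ(s)|² ds ≤ C. -/

import Mathlib

open MeasureTheory Set

noncomputable section

abbrev Ed (d : ℕ) : Type := EuclideanSpace ℝ (Fin d)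

/-- `f` is absolutely continuous on `[0,T]` with (integrable) derivative `f'`
whose norm is square integrable. -/
def HasL2Deriv {d : ℕ} (T : ℝ) (f f' : ℝ → Ed d) : Prop :=
  IntervalIntegrable f' volume 0 T ∧
  IntervalIntegrable (fun s => ‖f' s‖ ^ 2) volume 0 T ∧
  ∀ t ∈ Icc (0:ℝ) T, f t = f 0 + ∫ s in (0:ℝ)..t, f' s

/-- The drift mismatch appearing in the rate function of the generalized
self-interacting diffusion with initial data `(t₀, μ₀)`. -/
def drift {d : ℕ} (V F : Ed d → ℝ) (t₀ : ℝ) (μ₀ : Measure (Ed d))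
    (f f' : ℝ → Ed d) (t : ℝ) : Ed d :=
  f' t + gradient V (f t) + (t₀ / (t₀ + t)) • (∫ u, gradient F (f t - u) ∂μ₀)
    + (1 / (t₀ + t)) • (∫ s in (0:ℝ)..t, gradient F (f t - f s))

section Helpers

variable {d : ℕ} {F : Ed d → ℝ} {LF : ℝ}

lemma grad_growth (hLF : 0 ≤ LF)
    (hFlip : ∀ x y : Ed d, ‖gradient F x - gradient F y‖ ≤ LF * ‖x - y‖) (x : Ed d) :
    ‖gradient F x‖ ≤ ‖gradient F 0‖ + LF * ‖x‖ := by
  have h := hFlip x 0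
  simp only [sub_zero] at h
  have := norm_sub_norm_le (gradient F x) (gradient F 0)
  linarith

lemma grad_cont (hLF : 0 ≤ LF)
    (hFlip : ∀ x y : Ed d, ‖gradient F x - gradient F y‖ ≤ LF * ‖x - y‖) :
    Continuous (gradient F) := by
  have : LipschitzWith LF.toNNReal (gradient F) := by
    apply LipschitzWith.of_dist_le_mul
    intro x y
    rw [dist_eq_norm, dist_eq_norm, Real.coe_toNNReal LF hLF]
    exact hFlip x y
  exact this.continuous

lemma moment_one {μ₀ : Measure (Ed d)} [IsProbabilityMeasure μ₀] {M : ℝ}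
    (h2 : Integrable (fun u => ‖u‖ ^ 2) μ₀) (hM : (∫ u, ‖u‖ ^ 2 ∂μ₀) ≤ M) :
    Integrable (fun u : Ed d => ‖u‖) μ₀ ∧ (∫ u, ‖u‖ ∂μ₀) ≤ (1 + M) / 2 := by
  have hmono : ∀ u : Ed d, ‖u‖ ≤ (1 + ‖u‖^2)/2 := by
    intro u; nlinarith [norm_nonneg u, sq_nonneg (‖u‖ - 1)]
  have hint : Integrable (fun u : Ed d => (1 + ‖u‖^2)/2) μ₀ :=
    ((integrable_const 1).add h2).div_const 2
  have hni : Integrable (fun u : Ed d => ‖u‖) μ₀ := by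
    apply hint.mono' (by fun_prop)
    filter_upwards with u
    rw [Real.norm_of_nonneg (norm_nonneg u)]
    exact hmono u
  refine ⟨hni, ?_⟩
  calc (∫ u, ‖u‖ ∂μ₀) ≤ ∫ u, (1 + ‖u‖^2)/2 ∂μ₀ := integral_mono hni hint hmono
    _ ≤ (1 + M)/2 := by
        rw [integral_div, integral_add (integrable_const 1) h2, integral_const]
        simp; linarith

lemma mf_integrable (hLF : 0 ≤ LF)
    (hFlip : ∀ x y : Ed d, ‖gradient F x - gradient F y‖ ≤ LF * ‖x - y‖)
    (μ₀ : Measure (Ed d)) [IsProbabilityMeasure μ₀]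
    (hnorm : Integrable (fun u : Ed d => ‖u‖) μ₀) (x : Ed d) :
    Integrable (fun u => gradient F (x - u)) μ₀ := by
  apply Integrable.mono' ((integrable_const (‖gradient F 0‖ + LF * ‖x‖)).add (hnorm.const_mul LF))
  · exact ((grad_cont hLF hFlip).comp (continuous_const.sub continuous_id)).aestronglyMeasurable
  · filter_upwards with u
    calc ‖gradient F (x - u)‖ ≤ ‖gradient F 0‖ + LF * ‖x - u‖ := grad_growth hLF hFlip _
      _ ≤ ‖gradient F 0‖ + LF * (‖x‖ + ‖u‖) := by
          have := norm_sub_le x u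
          nlinarith
      _ = ‖gradient F 0‖ + LF * ‖x‖ + LF * ‖u‖ := by ring

lemma mf_bound (hLF : 0 ≤ LF)
    (hFlip : ∀ x y : Ed d, ‖gradient F x - gradient F y‖ ≤ LF * ‖x - y‖)
    (μ₀ : Measure (Ed d)) [IsProbabilityMeasure μ₀]
    (hnorm : Integrable (fun u : Ed d => ‖u‖) μ₀) (x : Ed d) :
    ‖∫ u, gradient F (x - u) ∂μ₀‖
      ≤ ‖gradient F 0‖ + LF * ‖x‖ + LF * ∫ u, ‖u‖ ∂μ₀ := by
  calc ‖∫ u, gradient F (x - u) ∂μ₀‖ ≤ ∫ u, ‖gradient F (x - u)‖ ∂μ₀ :=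
        norm_integral_le_integral_norm _
    _ ≤ ∫ u, (‖gradient F 0‖ + LF * ‖x‖ + LF * ‖u‖) ∂μ₀ := by
        apply integral_mono (mf_integrable hLF hFlip μ₀ hnorm x).norm
          ((integrable_const (‖gradient F 0‖ + LF * ‖x‖)).add (hnorm.const_mul LF))
        intro u
        calc ‖gradient F (x - u)‖ ≤ ‖gradient F 0‖ + LF * ‖x - u‖ := grad_growth hLF hFlip _
          _ ≤ ‖gradient F 0‖ + LF * (‖x‖ + ‖u‖) := by
              have := norm_sub_le x u
              nlinarith
          _ = ‖gradient F 0‖ + LF * ‖x‖ + LF * ‖u‖ := by ring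
    _ = ‖gradient F 0‖ + LF * ‖x‖ + LF * ∫ u, ‖u‖ ∂μ₀ := by
        rw [integral_add (integrable_const _) (hnorm.const_mul LF), integral_const,
          integral_const_mul]
        simp

lemma mf_lip (hLF : 0 ≤ LF)
    (hFlip : ∀ x y : Ed d, ‖gradient F x - gradient F y‖ ≤ LF * ‖x - y‖)
    (μ₀ : Measure (Ed d)) [IsProbabilityMeasure μ₀]
    (hnorm : Integrable (fun u : Ed d => ‖u‖) μ₀) (x y : Ed d) :
    ‖(∫ u, gradient F (x - u) ∂μ₀) - ∫ u, gradient F (y - u) ∂μ₀‖ ≤ LF * ‖x - y‖ := by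
  rw [← integral_sub (mf_integrable hLF hFlip μ₀ hnorm x) (mf_integrable hLF hFlip μ₀ hnorm y)]
  calc ‖∫ u, (gradient F (x - u) - gradient F (y - u)) ∂μ₀‖
      ≤ ∫ u, ‖gradient F (x - u) - gradient F (y - u)‖ ∂μ₀ := norm_integral_le_integral_norm _
    _ ≤ ∫ _u, LF * ‖x - y‖ ∂μ₀ := by
        apply integral_mono_of_nonneg (by filter_upwards with u; positivity) (integrable_const _)
        filter_upwards with u
        calc ‖gradient F (x - u) - gradient F (y - u)‖ ≤ LF * ‖x - u - (y - u)‖ := hFlip _ _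
          _ = LF * ‖x - y‖ := by congr 2; abel
    _ = LF * ‖x - y‖ := by simp

lemma mf_cont (hLF : 0 ≤ LF)
    (hFlip : ∀ x y : Ed d, ‖gradient F x - gradient F y‖ ≤ LF * ‖x - y‖)
    (μ₀ : Measure (Ed d)) [IsProbabilityMeasure μ₀]
    (hnorm : Integrable (fun u : Ed d => ‖u‖) μ₀) :
    Continuous (fun x : Ed d => ∫ u, gradient F (x - u) ∂μ₀) := by
  have : LipschitzWith LF.toNNReal (fun x : Ed d => ∫ u, gradient F (x - u) ∂μ₀) := by
    apply LipschitzWith.of_dist_le_mul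
    intro x y
    rw [dist_eq_norm, dist_eq_norm, Real.coe_toNNReal LF hLF]
    exact mf_lip hLF hFlip μ₀ hnorm x y
  exact this.continuous

end Helpers

set_option maxHeartbeats 1600000 in
/-- coercivity of the rate function — a uniform bound on the `L²` norm of
the derivative over all paths with rate function at most `α`, starting points in a ball
of radius `R`, initial measures with second moment at most `M`, and past-times `t₀ ≥ τ`. -/
theorem stmt4 {d : ℕ} (hd : 1 ≤ d)
    (V F : Ed d → ℝ) (hV : ContDiff ℝ 2 V) (hF : ContDiff ℝ 2 F)
    (LV LF : ℝ) (hLV : 0 ≤ LV) (hLF : 0 ≤ LF)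
    (hVlip : ∀ x y : Ed d, ‖gradient V x - gradient V y‖ ≤ LV * ‖x - y‖)
    (hFlip : ∀ x y : Ed d, ‖gradient F x - gradient F y‖ ≤ LF * ‖x - y‖)
    (T α R M τ : ℝ) (hT : 0 < T) (hα : 0 ≤ α) (hR : 0 < R) (hM : 0 < M) (hτ : 0 < τ) :
    ∃ C > (0:ℝ),
      ∀ t₀ : ℝ, τ ≤ t₀ →
      ∀ μ₀ : Measure (Ed d), IsProbabilityMeasure μ₀ →
        Integrable (fun u => ‖u‖ ^ 2) μ₀ → (∫ u, ‖u‖ ^ 2 ∂μ₀) ≤ M →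
      ∀ x₀ : Ed d, ‖x₀‖ ≤ R →
      ∀ f f' : ℝ → Ed d, f 0 = x₀ → HasL2Deriv T f f' →
        (∫ t in (0:ℝ)..T, ‖drift V F t₀ μ₀ f f' t‖ ^ 2) ≤ α →
        (∫ s in (0:ℝ)..T, ‖f' s‖ ^ 2) ≤ C := by
  obtain ⟨cV, hcVdef⟩ : ∃ x : ℝ, x = ‖gradient V 0‖ := ⟨_, rfl⟩
  obtain ⟨cF, hcFdef⟩ : ∃ x : ℝ, x = ‖gradient F 0‖ := ⟨_, rfl⟩
  have hcV0 : 0 ≤ cV := by rw [hcVdef]; exact norm_nonneg _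
  have hcF0 : 0 ≤ cF := by rw [hcFdef]; exact norm_nonneg _
  obtain ⟨K₁, hK₁def⟩ :
      ∃ x : ℝ, x = cV + LV*R + cF + LF*R + LF*(1+M)/2 + (1/τ)*(cF*T) + (1/τ)*(2*LF*R*T) :=
    ⟨_, rfl⟩
  obtain ⟨K₂, hK₂def⟩ : ∃ x : ℝ, x = LV + LF + (1/τ)*(2*LF*T) := ⟨_, rfl⟩
  have hτ' : (0:ℝ) ≤ 1/τ := by positivity
  have hK₁0 : 0 ≤ K₁ := by
    have h1 := mul_nonneg hLV hR.le
    have h2 := mul_nonneg hLF hR.le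
    have h3 : 0 ≤ LF*(1+M)/2 := by nlinarith
    have h4 : 0 ≤ (1/τ)*(cF*T) := by positivity
    have h5 : 0 ≤ (1/τ)*(2*LF*R*T) := by
      apply mul_nonneg hτ'; nlinarith
    rw [hK₁def]; linarith
  have hK₂0 : 0 ≤ K₂ := by
    have h5 : 0 ≤ (1/τ)*(2*LF*T) := by apply mul_nonneg hτ'; nlinarith
    rw [hK₂def]; linarith
  obtain ⟨aa, haadef⟩ : ∃ x : ℝ, x = (T+α)/2 + K₁*T := ⟨_, rfl⟩
  have haa0 : 0 ≤ aa := by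
    have h1 := mul_nonneg hK₁0 hT.le
    have h2 : 0 ≤ (T+α)/2 := by linarith
    rw [haadef]; exact add_nonneg h2 h1
  obtain ⟨B, hBdef⟩ : ∃ x : ℝ, x = aa + K₂ * gronwallBound 0 K₂ aa T := ⟨_, rfl⟩
  refine ⟨2*α + 2*T*(K₁+K₂*B)^2 + 1, by nlinarith [mul_nonneg hT.le (sq_nonneg (K₁+K₂*B))], ?_⟩
  intro t₀ ht₀ μ₀ hprob h2int h2M x₀ hx₀ f f' hf0 hL2 hdrift
  obtain ⟨hf'int, hf'2int, hfae⟩ := hL2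
  haveI := hprob
  obtain ⟨hnorm, hmean⟩ := moment_one h2int h2M
  -- the scalar primitive φ
  obtain ⟨g, hgdef⟩ : ∃ x : ℝ → ℝ, x = Set.indicator (Icc 0 T) (fun s => ‖f' s‖) := ⟨_, rfl⟩
  have hg0 : ∀ s, 0 ≤ g s := by
    intro s; rw [hgdef]
    exact Set.indicator_nonneg (fun u _ => norm_nonneg _) s
  have gint : Integrable g volume := by
    rw [hgdef]
    exact ((intervalIntegrable_iff_integrableOn_Icc_of_le hT.le).mp
      hf'int.norm).integrable_indicator measurableSet_Icc
  obtain ⟨φ, hφdef⟩ : ∃ x : ℝ → ℝ, x = fun t => ∫ s in (0:ℝ)..t, g s := ⟨_, rfl⟩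
  have φcont : Continuous φ := by rw [hφdef]; exact gint.continuous_primitive 0
  have φeq : ∀ t ∈ Icc (0:ℝ) T, φ t = ∫ s in (0:ℝ)..t, ‖f' s‖ := by
    intro t ht
    simp only [hφdef]
    apply intervalIntegral.integral_congr
    intro s hs
    rw [uIcc_of_le ht.1] at hs
    have hsT : s ∈ Icc (0:ℝ) T := ⟨hs.1, hs.2.trans ht.2⟩
    simp only [hgdef]
    exact Set.indicator_of_mem hsT _
  have φmono : ∀ s t : ℝ, s ≤ t → φ s ≤ φ t := by
    intro s t hst
    have hadd : (∫ x in (0:ℝ)..s, g x) + ∫ x in s..t, g x = ∫ x in (0:ℝ)..t, g x :=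
      intervalIntegral.integral_add_adjacent_intervals
        (gint.intervalIntegrable) (gint.intervalIntegrable)
    have hpos : 0 ≤ ∫ u in s..t, g u :=
      intervalIntegral.integral_nonneg hst (fun u _ => hg0 u)
    simp only [hφdef]
    linarith
  have φnonneg : ∀ t : ℝ, 0 ≤ t → 0 ≤ φ t := by
    intro t ht
    simp only [hφdef]
    exact intervalIntegral.integral_nonneg ht (fun u _ => hg0 u)
  -- the continuous representative of f
  obtain ⟨gvec, hgvdef⟩ : ∃ x : ℝ → Ed d, x = Set.indicator (Icc 0 T) f' := ⟨_, rfl⟩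
  have gvint : Integrable gvec volume := by
    rw [hgvdef]
    exact ((intervalIntegrable_iff_integrableOn_Icc_of_le hT.le).mp
      hf'int).integrable_indicator measurableSet_Icc
  obtain ⟨ft, hftdef⟩ : ∃ x : ℝ → Ed d, x = fun t => f 0 + ∫ s in (0:ℝ)..t, gvec s := ⟨_, rfl⟩
  have ftcont : Continuous ft := by
    rw [hftdef]
    exact continuous_const.add (gvint.continuous_primitive 0)
  have fteq : ∀ t ∈ Icc (0:ℝ) T, ft t = f t := by
    intro t ht
    rw [hfae t ht, hftdef]
    dsimp only
    congr 1
    apply intervalIntegral.integral_congr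
    intro s hs
    rw [uIcc_of_le ht.1] at hs
    have hsT : s ∈ Icc (0:ℝ) T := ⟨hs.1, hs.2.trans ht.2⟩
    simp only [hgvdef]
    exact Set.indicator_of_mem hsT _
  have hfnorm : ∀ t ∈ Icc (0:ℝ) T, ‖f t‖ ≤ R + φ t := by
    intro t ht
    have h1 : ‖∫ s in (0:ℝ)..t, f' s‖ ≤ ∫ s in (0:ℝ)..t, ‖f' s‖ :=
      intervalIntegral.norm_integral_le_integral_norm ht.1
    calc ‖f t‖ = ‖f 0 + ∫ s in (0:ℝ)..t, f' s‖ := by rw [← hfae t ht]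
      _ ≤ ‖f 0‖ + ‖∫ s in (0:ℝ)..t, f' s‖ := norm_add_le _ _
      _ ≤ R + φ t := by rw [φeq t ht, hf0]; linarith
  have hftnorm : ∀ t ∈ Icc (0:ℝ) T, ‖ft t‖ ≤ R + φ t := by
    intro t ht; rw [fteq t ht]; exact hfnorm t ht
  -- the lower-order term b
  obtain ⟨G, hGdef⟩ : ∃ x : Ed d → Ed d, x = fun x => ∫ u, gradient F (x - u) ∂μ₀ := ⟨_, rfl⟩
  have Gcont : Continuous G := by rw [hGdef]; exact mf_cont hLF hFlip μ₀ hnorm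
  obtain ⟨I, hIdef⟩ : ∃ x : ℝ → Ed d, x = fun t => ∫ s in (0:ℝ)..t, gradient F (ft t - ft s) := ⟨_, rfl⟩
  have Icont : Continuous I := by
    rw [hIdef]
    exact intervalIntegral.continuous_parametric_intervalIntegral_of_continuous
      (f := fun t s => gradient F (ft t - ft s))
      ((grad_cont hLF hFlip).comp ((ftcont.comp continuous_fst).sub (ftcont.comp continuous_snd)))
      continuous_id
  obtain ⟨b, hbdef⟩ : ∃ x : ℝ → Ed d,
      x = fun t => gradient V (ft t) + (t₀ / (t₀ + t)) • G (ft t) + (1 / (t₀ + t)) • I t :=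
    ⟨_, rfl⟩
  have hne : ∀ t ∈ Icc (0:ℝ) T, t₀ + t ≠ 0 := by
    intro t ht; have h := ht.1; have : 0 < t₀ + t := by linarith
    exact ne_of_gt this
  have bcontOn : ContinuousOn b (Icc (0:ℝ) T) := by
    rw [hbdef]
    refine ContinuousOn.add (ContinuousOn.add ?_ ?_) ?_
    · exact ((grad_cont hLV hVlip).comp ftcont).continuousOn
    · exact (continuousOn_const.div ((continuous_const.add continuous_id).continuousOn) hne).smul
        (Gcont.comp ftcont).continuousOn
    · exact (continuousOn_const.div ((continuous_const.add continuous_id).continuousOn) hne).smul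
        Icont.continuousOn
  have bint : IntervalIntegrable b volume 0 T :=
    ContinuousOn.intervalIntegrable (by rw [uIcc_of_le hT.le]; exact bcontOn)
  obtain ⟨D, hDdef⟩ : ∃ x : ℝ → Ed d, x = drift V F t₀ μ₀ f f' := ⟨_, rfl⟩
  rw [← hDdef] at hdrift
  have Deq : ∀ t ∈ Icc (0:ℝ) T, D t = f' t + b t := by
    intro t ht
    have hI : (∫ s in (0:ℝ)..t, gradient F (ft t - f s))
        = ∫ s in (0:ℝ)..t, gradient F (ft t - ft s) := by
      apply intervalIntegral.integral_congr
      intro s hs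
      rw [uIcc_of_le ht.1] at hs
      simp only [fteq s ⟨hs.1, hs.2.trans ht.2⟩]
    simp only [hDdef, drift, hbdef, hGdef, hIdef]
    rw [← fteq t ht, hI]
    abel
  have haeD : (fun t => f' t + b t) =ᵐ[volume.restrict (Set.uIoc (0:ℝ) T)] D := by
    filter_upwards [ae_restrict_mem measurableSet_uIoc] with t ht
    rw [uIoc_of_le hT.le] at ht
    exact (Deq t ⟨ht.1.le, ht.2⟩).symm
  have Dint : IntervalIntegrable D volume 0 T := (hf'int.add bint).congr_ae haeD
  have bn2int : IntervalIntegrable (fun t => 2*‖f' t‖^2 + 2*‖b t‖^2) volume 0 T :=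
    (hf'2int.const_mul 2).add
      (ContinuousOn.intervalIntegrable
        (by rw [uIcc_of_le hT.le]; exact continuousOn_const.mul (bcontOn.norm.pow 2)))
  have DSqint : IntervalIntegrable (fun t => ‖D t‖^2) volume 0 T := by
    apply bn2int.mono_fun
      ((continuous_pow 2).comp_aestronglyMeasurable Dint.def'.aestronglyMeasurable.norm)
    filter_upwards [ae_restrict_mem measurableSet_uIoc] with t ht
    rw [uIoc_of_le hT.le] at ht
    have hD := Deq t ⟨ht.1.le, ht.2⟩
    have h1 : ‖D t‖ ≤ ‖f' t‖ + ‖b t‖ := by rw [hD]; exact norm_add_le _ _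
    have hA : (0:ℝ) ≤ ‖D t‖^2 := sq_nonneg _
    have hB2 : (0:ℝ) ≤ 2*‖f' t‖^2 + 2*‖b t‖^2 := by positivity
    rw [Real.norm_of_nonneg hA, Real.norm_of_nonneg hB2]
    nlinarith [norm_nonneg (D t), norm_nonneg (f' t), norm_nonneg (b t),
      sq_nonneg (‖f' t‖ - ‖b t‖)]
  have hDsqT : ∀ t ∈ Icc (0:ℝ) T, (∫ s in (0:ℝ)..t, ‖D s‖^2) ≤ α := by
    intro t ht
    refine le_trans (intervalIntegral.integral_mono_interval le_rfl ht.1 ht.2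
      (Filter.Eventually.of_forall fun s => by positivity) DSqint) ?_
    exact hdrift
  -- pointwise bound on b
  have hbb : ∀ t ∈ Icc (0:ℝ) T, ‖b t‖ ≤ K₁ + K₂ * φ t := by
    intro t ht
    have hφt : 0 ≤ φ t := φnonneg t ht.1
    have h0 : (0:ℝ) < t₀ + t := by have := ht.1; linarith
    have hft' : ‖ft t‖ ≤ R + φ t := hftnorm t ht
    have hc1 : |t₀ / (t₀ + t)| ≤ 1 := by
      rw [abs_of_nonneg (div_nonneg (by linarith) h0.le)]
      rw [div_le_one h0]
      linarith [ht.1]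
    have hc2 : |1 / (t₀ + t)| ≤ 1/τ := by
      rw [abs_of_nonneg (div_nonneg zero_le_one h0.le)]
      apply one_div_le_one_div_of_le hτ
      linarith [ht.1]
    have e1 : ‖gradient V (ft t)‖ ≤ cV + LV * (R + φ t) := by
      have := grad_growth hLV hVlip (ft t)
      have := mul_le_mul_of_nonneg_left hft' hLV
      rw [hcVdef]; linarith
    have e2 : |t₀ / (t₀ + t)| * ‖G (ft t)‖ ≤ cF + LF * (R + φ t) + LF * (1+M)/2 := by
      have h2 := mf_bound hLF hFlip μ₀ hnorm (ft t)
      have h3 := mul_le_mul_of_nonneg_left hft' hLF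
      have h4 := mul_le_mul_of_nonneg_left hmean hLF
      have h5 : ‖G (ft t)‖ ≤ cF + LF * (R + φ t) + LF * (1+M)/2 := by
        simp only [hGdef]
        rw [hcFdef]
        calc ‖∫ u, gradient F (ft t - u) ∂μ₀‖
            ≤ ‖gradient F 0‖ + LF * ‖ft t‖ + LF * ∫ u, ‖u‖ ∂μ₀ := h2
          _ ≤ ‖gradient F 0‖ + LF * (R + φ t) + LF * (1+M)/2 := by nlinarith
      calc |t₀ / (t₀ + t)| * ‖G (ft t)‖ ≤ 1 * ‖G (ft t)‖ :=
            mul_le_mul_of_nonneg_right hc1 (norm_nonneg _)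
        _ = ‖G (ft t)‖ := one_mul _
        _ ≤ _ := h5
    have e3 : |1 / (t₀ + t)| * ‖I t‖ ≤ (1/τ) * ((cF + 2*LF*(R + φ t)) * T) := by
      have hC0 : 0 ≤ cF + 2*LF*(R + φ t) := by nlinarith
      have hIb : ‖I t‖ ≤ (cF + 2*LF*(R + φ t)) * T := by
        have h6 : ‖I t‖ ≤ (cF + 2*LF*(R + φ t)) * |t - 0| := by
          simp only [hIdef]
          apply intervalIntegral.norm_integral_le_of_norm_le_const
          intro s hs
          rw [uIoc_of_le ht.1] at hs
          have hsT : s ∈ Icc (0:ℝ) T := ⟨hs.1.le, hs.2.trans ht.2⟩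
          have hfs' : ‖ft s‖ ≤ R + φ s := hftnorm s hsT
          have hφs : φ s ≤ φ t := φmono s t hs.2
          have hdiff : ‖ft t - ft s‖ ≤ 2*(R + φ t) := by
            have := norm_sub_le (ft t) (ft s)
            linarith
          have h7 := grad_growth hLF hFlip (ft t - ft s)
          have h8 := mul_le_mul_of_nonneg_left hdiff hLF
          rw [hcFdef]
          calc ‖gradient F (ft t - ft s)‖ ≤ ‖gradient F 0‖ + LF * ‖ft t - ft s‖ := h7
            _ ≤ ‖gradient F 0‖ + 2*LF*(R + φ t) := by linarith
        have h9 : |t - 0| ≤ T := by rw [sub_zero, abs_of_nonneg ht.1]; exact ht.2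
        calc ‖I t‖ ≤ (cF + 2*LF*(R + φ t)) * |t - 0| := h6
          _ ≤ (cF + 2*LF*(R + φ t)) * T := mul_le_mul_of_nonneg_left h9 hC0
      calc |1 / (t₀ + t)| * ‖I t‖ ≤ (1/τ) * ‖I t‖ :=
            mul_le_mul_of_nonneg_right hc2 (norm_nonneg _)
        _ ≤ (1/τ) * ((cF + 2*LF*(R + φ t)) * T) := mul_le_mul_of_nonneg_left hIb hτ'
    have htri : ‖b t‖ ≤ ‖gradient V (ft t)‖ + |t₀ / (t₀ + t)| * ‖G (ft t)‖
        + |1 / (t₀ + t)| * ‖I t‖ := by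
      simp only [hbdef]
      calc ‖gradient V (ft t) + (t₀ / (t₀ + t)) • G (ft t) + (1 / (t₀ + t)) • I t‖
          ≤ ‖gradient V (ft t)‖ + ‖(t₀ / (t₀ + t)) • G (ft t)‖ + ‖(1 / (t₀ + t)) • I t‖ :=
            norm_add₃_le
        _ = _ := by rw [norm_smul, norm_smul, Real.norm_eq_abs, Real.norm_eq_abs]
    have hfin : cV + LV * (R + φ t) + (cF + LF * (R + φ t) + LF * (1+M)/2)
        + (1/τ) * ((cF + 2*LF*(R + φ t)) * T) = K₁ + K₂ * φ t := by
      rw [hK₁def, hK₂def]; ring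
    linarith
  -- the primitive of φ and the integral inequality
  obtain ⟨Ψ, hΨdef⟩ : ∃ x : ℝ → ℝ, x = fun t => ∫ s in (0:ℝ)..t, φ s := ⟨_, rfl⟩
  have Ψcont : Continuous Ψ := by
    rw [hΨdef]
    exact intervalIntegral.continuous_primitive (fun a b => φcont.intervalIntegrable a b) 0
  have Ψnonneg : ∀ t ∈ Icc (0:ℝ) T, 0 ≤ Ψ t := by
    intro t ht
    rw [hΨdef]
    exact intervalIntegral.integral_nonneg ht.1 (fun s hs => φnonneg s hs.1)
  have hΨ0 : ‖Ψ 0‖ ≤ 0 := by rw [hΨdef]; simp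
  have hΨd : ∀ t ∈ Ico (0:ℝ) T, HasDerivWithinAt Ψ (φ t) (Ici t) t := by
    intro t _
    rw [hΨdef]
    exact (intervalIntegral.integral_hasDerivAt_right (φcont.intervalIntegrable 0 t)
      (φcont.aestronglyMeasurable.stronglyMeasurableAtFilter)
      φcont.continuousAt).hasDerivWithinAt
  have key : ∀ t ∈ Icc (0:ℝ) T, φ t ≤ aa + K₂ * Ψ t := by
    intro t ht
    have hsub : uIcc (0:ℝ) t ⊆ uIcc (0:ℝ) T := by
      rw [uIcc_of_le ht.1, uIcc_of_le hT.le]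
      exact Icc_subset_Icc le_rfl ht.2
    have hDn : IntervalIntegrable (fun s => ‖D s‖) volume 0 t := (Dint.norm).mono_set hsub
    have hcont2 : Continuous (fun s => K₁ + K₂ * φ s) :=
      continuous_const.add (continuous_const.mul φcont)
    have hRint : IntervalIntegrable (fun s => ‖D s‖ + (K₁ + K₂ * φ s)) volume 0 t :=
      hDn.add (hcont2.intervalIntegrable 0 t)
    have hφint : IntervalIntegrable (fun s => ‖f' s‖) volume 0 t := hf'int.norm.mono_set hsub
    have step1 : φ t ≤ ∫ s in (0:ℝ)..t, (‖D s‖ + (K₁ + K₂ * φ s)) := by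
      rw [φeq t ht]
      apply intervalIntegral.integral_mono_on ht.1 hφint hRint
      intro s hs
      have hsT : s ∈ Icc (0:ℝ) T := ⟨hs.1, hs.2.trans ht.2⟩
      have hDs := Deq s hsT
      have h1 : ‖f' s‖ ≤ ‖D s‖ + ‖b s‖ := by
        have h2 : f' s = D s - b s := by rw [hDs]; abel
        rw [h2]
        exact norm_sub_le _ _
      linarith [hbb s hsT]
    have step2 : (∫ s in (0:ℝ)..t, (‖D s‖ + (K₁ + K₂ * φ s)))
        = (∫ s in (0:ℝ)..t, ‖D s‖) + (K₁ * t + K₂ * Ψ t) := by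
      rw [intervalIntegral.integral_add hDn (hcont2.intervalIntegrable 0 t),
        intervalIntegral.integral_add (f := fun _ => K₁) (g := fun s => K₂ * φ s)
          intervalIntegrable_const
          ((continuous_const.mul φcont).intervalIntegrable 0 t),
        intervalIntegral.integral_const, intervalIntegral.integral_const_mul]
      simp only [hΨdef, smul_eq_mul, sub_zero]
      ring
    have step3 : (∫ s in (0:ℝ)..t, ‖D s‖) ≤ (T + α)/2 := by
      have hDsq : IntervalIntegrable (fun s => ‖D s‖^2) volume 0 t := DSqint.mono_set hsub
      have h4 : (∫ s in (0:ℝ)..t, ‖D s‖) ≤ ∫ s in (0:ℝ)..t, (1 + ‖D s‖^2)/2 := by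
        apply intervalIntegral.integral_mono_on ht.1 hDn
          ((intervalIntegrable_const.add hDsq).div_const 2)
        intro s _
        nlinarith [norm_nonneg (D s), sq_nonneg (‖D s‖ - 1)]
      have h5 : (∫ s in (0:ℝ)..t, (1 + ‖D s‖^2)/2) = (t + ∫ s in (0:ℝ)..t, ‖D s‖^2)/2 := by
        rw [intervalIntegral.integral_div,
          intervalIntegral.integral_add intervalIntegrable_const hDsq,
          intervalIntegral.integral_const]
        simp
      have h6 := hDsqT t ht
      rw [h5] at h4
      have htT : t ≤ T := ht.2
      linarith
    have hK1t : K₁ * t ≤ K₁ * T := mul_le_mul_of_nonneg_left ht.2 hK₁0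
    rw [haadef]
    linarith [step2 ▸ step1]
  have hbound : ∀ t ∈ Ico (0:ℝ) T, ‖φ t‖ ≤ K₂ * ‖Ψ t‖ + aa := by
    intro t ht
    have htI : t ∈ Icc (0:ℝ) T := ⟨ht.1, ht.2.le⟩
    rw [Real.norm_of_nonneg (φnonneg t ht.1), Real.norm_of_nonneg (Ψnonneg t htI)]
    linarith [key t htI]
  have hgron := norm_le_gronwallBound_of_norm_deriv_right_le Ψcont.continuousOn hΨd hΨ0 hbound
    T ⟨hT.le, le_rfl⟩
  have hΨT : Ψ T ≤ gronwallBound 0 K₂ aa T := by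
    rw [sub_zero, Real.norm_of_nonneg (Ψnonneg T ⟨hT.le, le_rfl⟩)] at hgron
    exact hgron
  have hφT : φ T ≤ B := by
    rw [hBdef]
    have hk := key T ⟨hT.le, le_rfl⟩
    nlinarith [mul_le_mul_of_nonneg_left hΨT hK₂0]
  have hB0 : 0 ≤ B := le_trans (φnonneg T hT.le) hφT
  have hKB0 : 0 ≤ K₁ + K₂ * B := by nlinarith
  have final1 : (∫ s in (0:ℝ)..T, ‖f' s‖^2)
      ≤ ∫ s in (0:ℝ)..T, (2*‖D s‖^2 + 2*(K₁ + K₂*B)^2) := by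
    apply intervalIntegral.integral_mono_on hT.le hf'2int
      ((DSqint.const_mul 2).add intervalIntegrable_const)
    intro s hs
    have hDs := Deq s hs
    have h1 : ‖f' s‖ ≤ ‖D s‖ + ‖b s‖ := by
      have h2 : f' s = D s - b s := by rw [hDs]; abel
      rw [h2]; exact norm_sub_le _ _
    have h2 := hbb s hs
    have h3 : φ s ≤ B := le_trans (φmono s T hs.2) hφT
    have h4 : ‖f' s‖ ≤ ‖D s‖ + (K₁ + K₂*B) := by
      nlinarith [mul_le_mul_of_nonneg_left h3 hK₂0]
    nlinarith [norm_nonneg (f' s), norm_nonneg (D s), sq_nonneg (‖D s‖ - (K₁ + K₂*B))]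
  have final2 : (∫ s in (0:ℝ)..T, (2*‖D s‖^2 + 2*(K₁ + K₂*B)^2))
      = 2*(∫ s in (0:ℝ)..T, ‖D s‖^2) + 2*(K₁ + K₂*B)^2*T := by
    rw [intervalIntegral.integral_add (DSqint.const_mul 2) intervalIntegrable_const,
      intervalIntegral.integral_const_mul, intervalIntegral.integral_const]
    simp only [smul_eq_mul, sub_zero]
    ring
  calc (∫ s in (0:ℝ)..T, ‖f' s‖^2)
      ≤ 2*(∫ s in (0:ℝ)..T, ‖D s‖^2) + 2*(K₁ + K₂*B)^2*T := by rw [← final2]; exact final1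
    _ ≤ 2*α + 2*T*(K₁+K₂*B)^2 + 1 := by nlinarith [sq_nonneg (K₁+K₂*B)]
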